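/- Let β ≠ 0 and M ∈ ℝ with M² ≠ β². Define F : ℝ³ → ℝ by F(x, y, z) = I₁(x, y, z) + (2M/β)·I₂^β(x, y, z) = ((β − M)/(2β))x² + ((β + M)/(2β))y² + z² − 2Mz. Then: (i) ∇F(0, 0, M) = 0; (ii) the Hessian matrix Hess F(0,0,M) is invertible with det(Hess F(0,0,M)) = 2(β² − M²)/β²; and (iii) the associated scalar quantity for the realization with rescaling function ν ≡ −1 and Casimir C_β := I₂^β equals I_{X_β}(0,0,M) := (−1)² · det(Hess F(0,0,M)) · ⟨(Hess F(0,0,M))⁻¹ ∇C_β(0,0,M), ∇C_β(0,0,M)⟩ = β² − M². -/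

import Mathlib

open Matrix

/-- Coordinate gradient of `f : ℝⁿ → ℝ` at `x`. -/
noncomputable def grad {n : ℕ} (f : (Fin n → ℝ) → ℝ) (x : Fin n → ℝ) : Fin n → ℝ :=
  fun i => fderiv ℝ f x (Pi.single i 1)

/-- Hessian matrix of `f : ℝⁿ → ℝ` at `x`. -/
noncomputable def hess {n : ℕ} (f : (Fin n → ℝ) → ℝ) (x : Fin n → ℝ) :
    Matrix (Fin n) (Fin n) ℝ :=
  Matrix.of fun i j => fderiv ℝ (fun y => fderiv ℝ f y (Pi.single j 1)) x (Pi.single i 1)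

/-- Jacobian matrix of a map `Φ : ℝⁿ → ℝⁿ` at `x`. -/
noncomputable def jac {n : ℕ} (Φ : (Fin n → ℝ) → (Fin n → ℝ)) (x : Fin n → ℝ) :
    Matrix (Fin n) (Fin n) ℝ :=
  Matrix.of fun i j => fderiv ℝ (fun y => Φ y i) x (Pi.single j 1)

/-- The Rikitake vector field `X_β(x,y,z) = (yz + βy, xz − βx, −xy)`. -/
noncomputable def Riki (β : ℝ) (p : Fin 3 → ℝ) : Fin 3 → ℝ :=
  ![p 1 * p 2 + β * p 1, p 0 * p 2 - β * p 0, -(p 0 * p 1)]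

/-- The first integral `I₁(x,y,z) = ½(x² + y²) + z²` of the Rikitake system. -/
noncomputable def rikiI1 (p : Fin 3 → ℝ) : ℝ :=
  (1 / 2) * ((p 0) ^ 2 + (p 1) ^ 2) + (p 2) ^ 2

/-- The first integral `I₂^β(x,y,z) = ¼(−x² + y²) − βz` of the Rikitake system. -/
noncomputable def rikiI2 (β : ℝ) (p : Fin 3 → ℝ) : ℝ :=
  (1 / 4) * (-(p 0) ^ 2 + (p 1) ^ 2) - β * p 2

/-- Lyapunov stability of an equilibrium `p` of the vector field `X` on `ℝ³`. -/
def LyapunovStable3 (X : (Fin 3 → ℝ) → (Fin 3 → ℝ)) (p : Fin 3 → ℝ) : Prop :=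
  ∀ U : Set (Fin 3 → ℝ), IsOpen U → p ∈ U →
    ∃ V : Set (Fin 3 → ℝ), V ⊆ U ∧ IsOpen V ∧ p ∈ V ∧
      ∀ f : ℝ → (Fin 3 → ℝ), f 0 ∈ V →
        (∀ t : ℝ, 0 ≤ t → HasDerivWithinAt f (X (f t)) (Set.Ici 0) t) →
        ∀ t : ℝ, 0 ≤ t → f t ∈ U

/-- For the Rikitake system realized with `ν ≡ −1` and Casimir
`C_β := I₂^β`: the function `F = I₁ + (2M/β)·I₂^β` has a critical point at `(0,0,M)`, its
Hessian there is invertible with determinant `2(β² − M²)/β²`, and the associated scalar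
quantity equals `β² − M²`. -/
noncomputable def proj3 (i : Fin 3) : (Fin 3 → ℝ) →L[ℝ] ℝ := ContinuousLinearMap.proj i

lemma hasFDerivAt_quad3 (a b c d : ℝ) (x : Fin 3 → ℝ) :
    HasFDerivAt (fun p : Fin 3 → ℝ => a * (p 0)^2 + b * (p 1)^2 + c * (p 2)^2 + d * p 2)
      ((2*a*x 0) • proj3 0 + (2*b*x 1) • proj3 1 + (2*c*x 2 + d) • proj3 2) x := by
  have h0 : HasFDerivAt (fun p : Fin 3 → ℝ => p 0) (proj3 0) x := (proj3 0).hasFDerivAt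
  have h1 : HasFDerivAt (fun p : Fin 3 → ℝ => p 1) (proj3 1) x := (proj3 1).hasFDerivAt
  have h2 : HasFDerivAt (fun p : Fin 3 → ℝ => p 2) (proj3 2) x := (proj3 2).hasFDerivAt
  have key : (fun p : Fin 3 → ℝ => a * (p 0)^2 + b * (p 1)^2 + c * (p 2)^2 + d * p 2)
      = fun p : Fin 3 → ℝ => a * (p 0 * p 0) + b * (p 1 * p 1) + c * (p 2 * p 2) + d * p 2 := by
    funext p; ring
  rw [key]
  have h := ((((h0.mul h0).const_mul a).add ((h1.mul h1).const_mul b)).add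
      ((h2.mul h2).const_mul c)).add (h2.const_mul d)
  refine h.congr_fderiv ?_
  ext v
  simp [smul_smul]
  ring

lemma fderiv_quad3_apply (a b c d : ℝ) (x v : Fin 3 → ℝ) :
    fderiv ℝ (fun p : Fin 3 → ℝ => a * (p 0)^2 + b * (p 1)^2 + c * (p 2)^2 + d * p 2) x v
      = (2*a*x 0) * v 0 + (2*b*x 1) * v 1 + (2*c*x 2 + d) * v 2 := by
  rw [(hasFDerivAt_quad3 a b c d x).fderiv]
  simp [proj3]

lemma grad_quad3 (a b c d : ℝ) (x : Fin 3 → ℝ) :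
    grad (fun p : Fin 3 → ℝ => a * (p 0)^2 + b * (p 1)^2 + c * (p 2)^2 + d * p 2) x
      = ![2*a*x 0, 2*b*x 1, 2*c*x 2 + d] := by
  funext i
  simp only [grad, fderiv_quad3_apply]
  fin_cases i <;> simp [Pi.single_apply]

lemma hess_quad3 (a b c d : ℝ) (x : Fin 3 → ℝ) :
    hess (fun p : Fin 3 → ℝ => a * (p 0)^2 + b * (p 1)^2 + c * (p 2)^2 + d * p 2) x
      = Matrix.diagonal ![2*a, 2*b, 2*c] := by
  have inner : ∀ j : Fin 3, (fun y => fderiv ℝ (fun p : Fin 3 → ℝ =>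
      a * (p 0)^2 + b * (p 1)^2 + c * (p 2)^2 + d * p 2) y (Pi.single j 1))
      = fun y : Fin 3 → ℝ => (![2*a, 2*b, 2*c] j) * y j + (![0, 0, d] j) := by
    intro j; funext y; rw [fderiv_quad3_apply]
    fin_cases j <;> simp [Pi.single_apply]
  funext i j
  have hd : HasFDerivAt (fun y : Fin 3 → ℝ => (![2*a, 2*b, 2*c] j) * y j + (![0, 0, d] j))
      ((![2*a, 2*b, 2*c] j) • proj3 j) x :=
    ((proj3 j).hasFDerivAt.const_mul _).add_const _
  simp only [hess, Matrix.of_apply, inner j, hd.fderiv]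
  rcases eq_or_ne i j with h | h
  · subst h; simp [proj3, Pi.single_apply, Matrix.diagonal]
  · simp [proj3, Pi.single_apply, Matrix.diagonal, h, (Ne.symm h)]

theorem rikitake_scalar_quantity (β M : ℝ) (hβ : β ≠ 0) (hM : M ^ 2 ≠ β ^ 2)
    (F : (Fin 3 → ℝ) → ℝ) (hF : F = fun p => rikiI1 p + (2 * M / β) * rikiI2 β p) :
    (∀ p : Fin 3 → ℝ, F p = (β - M) / (2 * β) * (p 0) ^ 2 + (β + M) / (2 * β) * (p 1) ^ 2
        + (p 2) ^ 2 - 2 * M * p 2) ∧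
    grad F ![0, 0, M] = 0 ∧
    (hess F ![0, 0, M]).det = 2 * (β ^ 2 - M ^ 2) / β ^ 2 ∧
    (hess F ![0, 0, M]).det ≠ 0 ∧
    (-1 : ℝ) ^ 2 * (hess F ![0, 0, M]).det *
        (((hess F ![0, 0, M])⁻¹ *ᵥ grad (rikiI2 β) ![0, 0, M]) ⬝ᵥ grad (rikiI2 β) ![0, 0, M])
      = β ^ 2 - M ^ 2 := by
  set a : ℝ := (β - M) / (2 * β) with ha
  set b : ℝ := (β + M) / (2 * β) with hb
  have hβM : β ^ 2 - M ^ 2 ≠ 0 := sub_ne_zero.mpr (Ne.symm hM)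
  have ha0 : a ≠ 0 := by
    rw [ha]; refine div_ne_zero ?_ (by simpa using hβ)
    intro h; apply hβM; rw [sub_eq_zero] at h ⊢; rw [h]
  have hb0 : b ≠ 0 := by
    rw [hb]; refine div_ne_zero ?_ (by simpa using hβ)
    intro h; apply hβM
    have : β = -M := by linarith [h]
    rw [this]; ring
  have hF' : F = fun p : Fin 3 → ℝ =>
      a * (p 0)^2 + b * (p 1)^2 + 1 * (p 2)^2 + (-(2*M)) * p 2 := by
    subst hF; funext p; simp only [rikiI1, rikiI2, ha, hb]; field_simp; ring
  have hI2 : rikiI2 β = fun p : Fin 3 → ℝ =>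
      (-(1/4)) * (p 0)^2 + (1/4) * (p 1)^2 + 0 * (p 2)^2 + (-β) * p 2 := by
    funext p; simp only [rikiI2]; ring
  have hgrad2 : grad (rikiI2 β) ![0, 0, M] = ![0, 0, -β] := by
    rw [hI2, grad_quad3]
    funext i; fin_cases i <;> simp
  have hhess : hess F ![0, 0, M] = Matrix.diagonal ![2*a, 2*b, 2] := by
    rw [hF', hess_quad3]
    norm_num
  have hdet : (hess F ![0, 0, M]).det = 2 * (β ^ 2 - M ^ 2) / β ^ 2 := by
    rw [hhess, Matrix.det_diagonal, Fin.prod_univ_three]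
    simp only [Matrix.cons_val_zero, Matrix.cons_val_one, Matrix.head_cons,
      Matrix.cons_val_two, Matrix.tail_cons, ha, hb]
    field_simp; ring
  have hdet0 : (hess F ![0, 0, M]).det ≠ 0 := by
    rw [hdet]
    exact div_ne_zero (by exact mul_ne_zero two_ne_zero hβM) (pow_ne_zero 2 hβ)
  refine ⟨?_, ?_, hdet, hdet0, ?_⟩
  · intro p; rw [hF']; ring
  · rw [hF', grad_quad3]
    funext i; fin_cases i <;> simp
  · have hinv : (Matrix.diagonal ![2*a, 2*b, (2:ℝ)])⁻¹
        = Matrix.diagonal ![(2*a)⁻¹, (2*b)⁻¹, (2:ℝ)⁻¹] := by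
      apply Matrix.inv_eq_right_inv
      rw [Matrix.diagonal_mul_diagonal]
      have : (fun i => ![2*a, 2*b, (2:ℝ)] i * ![(2*a)⁻¹, (2*b)⁻¹, (2:ℝ)⁻¹] i) = (1 : Fin 3 → ℝ) := by
        funext i
        fin_cases i <;> simp <;> field_simp <;> ring
      rw [this]; exact Matrix.diagonal_one
    rw [hgrad2, hdet, hhess, hinv]
    simp only [Matrix.mulVec_diagonal, dotProduct, Fin.sum_univ_three]
    simp only [Matrix.cons_val_zero, Matrix.cons_val_one, Matrix.head_cons,
      Matrix.cons_val_two, Matrix.tail_cons]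
    field_simp
    ring
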